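/- arXiv:2306.02627 — 2 statements merged into one kernel-verified Lean document; each statement's English description precedes it below -/
import Mathlib

section
/- Fix p > 0 and u_r > 1. For t = 1, the integral ∫_{ℝ} (u_r² + v²)^{−1/2} · (log(u_r² + v²))^{−p/(1+p)} dv diverges (equals +∞). -/
open MeasureTheory Filter Real Set
open scoped ENNReal

theorem stmt_3 (p : ℝ) (hp : p > 0) (ur : ℝ) (hur : ur > 1) :
    ∫⁻ v : ℝ, ENNReal.ofReal ((ur ^ 2 + v ^ 2) ^ (-(1 : ℝ) / 2) *
      (Real.log (ur ^ 2 + v ^ 2)) ^ (-p / (1 + p))) = ⊤ := by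
  have hp1 : (0:ℝ) < 1 + p := by linarith
  set e : ℝ := -p / (1 + p) with he
  set f : ℝ → ℝ := fun v => (ur ^ 2 + v ^ 2) ^ (-(1:ℝ)/2) *
      (Real.log (ur ^ 2 + v ^ 2)) ^ e with hf
  set g : ℝ → ℝ := fun v => v / (ur ^ 2 + v ^ 2) *
      (Real.log (ur ^ 2 + v ^ 2)) ^ e with hg
  set G : ℝ → ℝ := fun v => ((1 + p) / 2) *
      (Real.log (ur ^ 2 + v ^ 2)) ^ ((1:ℝ) / (1 + p)) with hG
  -- basic facts
  have hA : ∀ v : ℝ, (0:ℝ) < ur ^ 2 + v ^ 2 := by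
    intro v; nlinarith [sq_nonneg v]
  have hA1 : ∀ v : ℝ, v ∈ Ici ur → (1:ℝ) < ur ^ 2 + v ^ 2 := by
    intro v hv; simp only [mem_Ici] at hv; nlinarith
  have hlogpos : ∀ v : ℝ, v ∈ Ici ur → (0:ℝ) < Real.log (ur ^ 2 + v ^ 2) := by
    intro v hv; exact Real.log_pos (hA1 v hv)
  -- derivative of G is g on Ici ur
  have hderiv : ∀ x ∈ Ici ur, HasDerivAt G (g x) x := by
    intro x hx
    have h1 : HasDerivAt (fun v : ℝ => ur ^ 2 + v ^ 2) (2 * x) x := by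
      simpa using (hasDerivAt_pow 2 x).const_add (ur ^ 2)
    have h2 : HasDerivAt (fun v : ℝ => Real.log (ur ^ 2 + v ^ 2))
        (2 * x / (ur ^ 2 + x ^ 2)) x := h1.log (ne_of_gt (hA x))
    have h3 := (h2.rpow_const (p := (1:ℝ)/(1+p))
        (Or.inl (ne_of_gt (hlogpos x hx))))
    have h4 := h3.const_mul ((1 + p) / 2)
    refine h4.congr_deriv ?_
    have : (1:ℝ)/(1+p) - 1 = e := by rw [he, div_sub_one hp1.ne']; congr 1; ring
    rw [hg, this]
    field_simp
  -- continuity of g on Icc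
  have hcont : ∀ b : ℝ, ContinuousOn g (Icc ur b) := by
    intro b
    intro x hx
    have hx' : x ∈ Ici ur := mem_Ici.2 hx.1
    apply ContinuousAt.continuousWithinAt
    have hA' : ContinuousAt (fun v : ℝ => ur ^ 2 + v ^ 2) x := by fun_prop
    have hlog : ContinuousAt (fun v : ℝ => Real.log (ur ^ 2 + v ^ 2)) x :=
      hA'.log (ne_of_gt (hA x))
    exact ((continuousAt_id.div hA' (ne_of_gt (hA x)))).mul
      (hlog.rpow_const (Or.inl (ne_of_gt (hlogpos x hx'))))
  -- g nonneg on Ici ur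
  have hgnn : ∀ v ∈ Ici ur, 0 ≤ g v := by
    intro v hv
    have hv0 : (0:ℝ) ≤ v := le_trans (by linarith) (mem_Ici.1 hv)
    exact mul_nonneg (div_nonneg hv0 (hA v).le)
      (Real.rpow_nonneg (hlogpos v hv).le _)
  -- pointwise bound f ≥ g on Ioi ur
  have hfg : ∀ v ∈ Ioi ur, g v ≤ f v := by
    intro v hv
    have hv' : v ∈ Ici ur := mem_Ici.2 (le_of_lt (mem_Ioi.1 hv))
    have hv0 : (0:ℝ) ≤ v := le_trans (by linarith) (mem_Ici.1 hv')
    have key : v / (ur ^ 2 + v ^ 2) ≤ (ur ^ 2 + v ^ 2) ^ (-(1:ℝ)/2) := by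
      rw [div_le_iff₀ (hA v)]
      have h1 : (ur ^ 2 + v ^ 2) ^ (-(1:ℝ)/2) * (ur ^ 2 + v ^ 2)
          = (ur ^ 2 + v ^ 2) ^ ((1:ℝ)/2) := by
        rw [← Real.rpow_add_one (hA v).ne']
        norm_num
      rw [h1]
      have h2 : v = (v ^ 2) ^ ((1:ℝ)/2) := by
        rw [← Real.rpow_natCast v 2, ← Real.rpow_mul hv0]
        norm_num
      calc v = (v ^ 2) ^ ((1:ℝ)/2) := h2
        _ ≤ (ur ^ 2 + v ^ 2) ^ ((1:ℝ)/2) := by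
            apply Real.rpow_le_rpow (sq_nonneg v) (by nlinarith) (by norm_num)
    exact mul_le_mul_of_nonneg_right key (Real.rpow_nonneg (hlogpos v hv').le _)
  -- measurability of f
  have hfm : Measurable fun v => ENNReal.ofReal (f v) := by
    apply Measurable.ennreal_ofReal
    have h : Measurable fun v : ℝ => ur ^ 2 + v ^ 2 :=
      (measurable_id.pow_const 2).const_add _
    exact (h.pow measurable_const).mul (h.log.pow measurable_const)
  -- main chain
  rw [eq_top_iff]
  calc (⊤ : ℝ≥0∞) ≤ ∫⁻ v in Ioi ur, ENNReal.ofReal (g v) := by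
        -- use FTC lower bounds tending to ∞
        have hGt : Tendsto (fun b => ENNReal.ofReal (G b - G ur)) atTop (nhds ⊤) := by
          have h1 : Tendsto (fun b : ℝ => ur ^ 2 + b ^ 2) atTop atTop :=
            tendsto_atTop_add_const_left _ _ (tendsto_pow_atTop two_ne_zero)
          have h2 : Tendsto (fun b : ℝ => Real.log (ur ^ 2 + b ^ 2)) atTop atTop :=
            Real.tendsto_log_atTop.comp h1
          have h3 : Tendsto (fun b : ℝ => (Real.log (ur ^ 2 + b ^ 2)) ^ ((1:ℝ)/(1+p)))
              atTop atTop := (tendsto_rpow_atTop (by positivity)).comp h2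
          have h4 : Tendsto G atTop atTop := by
            exact h3.const_mul_atTop (by positivity)
          exact ENNReal.tendsto_ofReal_atTop.comp
            (tendsto_atTop_add_const_right _ (-G ur) h4)
        refine le_of_tendsto hGt ?_
        filter_upwards [eventually_ge_atTop ur] with b hb
        have hII : IntervalIntegrable g volume ur b :=
          ((hcont b).mono (by rw [uIcc_of_le hb])).intervalIntegrable
        have hFTC : ∫ v in ur..b, g v = G b - G ur := by
          apply intervalIntegral.integral_eq_sub_of_hasDerivAt
          · intro x hx
            rw [uIcc_of_le hb] at hx
            exact hderiv x (mem_Ici.2 hx.1)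
          · exact hII
        have hInt : IntegrableOn g (Ioc ur b) volume := hII.1
        have hofReal : ENNReal.ofReal (G b - G ur)
            ≤ ∫⁻ v in Ioc ur b, ENNReal.ofReal (g v) := by
          rw [← hFTC, intervalIntegral.integral_of_le hb]
          rw [ofReal_integral_eq_lintegral_ofReal hInt]
          filter_upwards [ae_restrict_mem measurableSet_Ioc] with x hx
          exact hgnn x (mem_Ici.2 hx.1.le)
        exact hofReal.trans (lintegral_mono_set Ioc_subset_Ioi_self)
    _ ≤ ∫⁻ v in Ioi ur, ENNReal.ofReal (f v) := by
        apply setLIntegral_mono hfm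
        intro x hx
        exact ENNReal.ofReal_le_ofReal (hfg x hx)
    _ ≤ ∫⁻ v : ℝ, ENNReal.ofReal (f v) := setLIntegral_le_lintegral _ _
end

section
/- Let p > 0 and let φ(ξ) = exp((log ξ)^{1/(1+p)}) with the principal branch of log. There exists r₂ > e such that for every r ≥ r₂ and every ξ with Re ξ ≥ log r, |φ'(ξ)| ≤ 1 / (√(log r) · (log log r)^{p/(1+p)}). -/
open Real Filter Topology Complex in
theorem stmt_8 (p : ℝ) (hp : p > 0) :
    ∃ r₂ > Real.exp 1, ∀ r ≥ r₂, ∀ ξ : ℂ, ξ.re ≥ Real.log r →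
      ‖
          (deriv (fun w : ℂ => Complex.exp ((Complex.log w) ^ ((1 : ℂ) / (1 + (p : ℂ))))) ξ)‖ ≤
        1 / (Real.sqrt (Real.log r) * (Real.log (Real.log r)) ^ (p / (1 + p))) := by
  have hp1 : (0:ℝ) < 1 + p := by linarith
  set α : ℝ := 1/(1+p) with hαdef
  have hα0 : 0 < α := by positivity
  have hα1 : α < 1 := by rw [hαdef, div_lt_one hp1]; linarith
  -- key real lemma
  obtain ⟨M, hM⟩ : ∃ M : ℝ, ∀ x ≥ M, (x + Real.pi) ^ α ≤ x/2 := by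
    have h0 : Tendsto (fun x:ℝ => x ^ (α-1)) atTop (𝓝 0) := by
      have := tendsto_rpow_neg_atTop (show (0:ℝ) < 1-α by linarith)
      simpa [neg_sub] using this
    have h1 : ∀ᶠ x:ℝ in atTop, (2:ℝ)^α * x^(α-1) < 1/2 := by
      have h2 : Tendsto (fun x:ℝ => (2:ℝ)^α * x^(α-1)) atTop (𝓝 0) := by
        simpa using h0.const_mul ((2:ℝ)^α)
      exact h2.eventually_lt_const (by norm_num)
    obtain ⟨M, hM⟩ := (h1.and (eventually_ge_atTop (max Real.pi 1))).exists_forall_of_atTop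
    refine ⟨M, fun x hx => ?_⟩
    obtain ⟨hlt, hge⟩ := hM x hx
    have hxπ : Real.pi ≤ x := le_trans (le_max_left _ _) hge
    have hx1 : (1:ℝ) ≤ x := le_trans (le_max_right _ _) hge
    have hx0 : (0:ℝ) < x := by linarith
    have hpi : (0:ℝ) < Real.pi := Real.pi_pos
    calc (x + Real.pi) ^ α ≤ (2*x) ^ α :=
          Real.rpow_le_rpow (by positivity) (by linarith) hα0.le
      _ = 2^α * x^α := Real.mul_rpow (by norm_num) hx0.le
      _ = 2^α * x^(α-1) * x := by
          rw [mul_assoc, ← Real.rpow_add_one hx0.ne' (α-1)]; ring_nf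
      _ ≤ (1/2) * x := by nlinarith
      _ = x/2 := by ring
  refine ⟨Real.exp (Real.exp (max M 1)), ?_, ?_⟩
  · have h1 : (1:ℝ) < Real.exp (max M 1) := by
      calc (1:ℝ) < Real.exp 1 := by
            have := Real.exp_one_gt_d9; linarith
        _ ≤ Real.exp (max M 1) := Real.exp_le_exp.mpr (le_max_right _ _)
    exact Real.exp_lt_exp.mpr h1
  · intro r hr ξ hξ
    set L := Real.log r with hLdef
    have hL : Real.exp (max M 1) ≤ L := by
      have := Real.log_le_log (Real.exp_pos _) hr
      rwa [Real.log_exp] at this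
    have hLe : (1:ℝ) < Real.exp (max M 1) := by
      calc (1:ℝ) < Real.exp 1 := by have := Real.exp_one_gt_d9; linarith
        _ ≤ _ := Real.exp_le_exp.mpr (le_max_right _ _)
    have hL1 : 1 < L := lt_of_lt_of_le hLe hL
    have hLpos : 0 < L := by linarith
    set LL := Real.log L with hLLdef
    have hLL : max M 1 ≤ LL := by
      have := Real.log_le_log (Real.exp_pos _) hL
      rwa [Real.log_exp] at this
    have hLL1 : (1:ℝ) ≤ LL := le_trans (le_max_right _ _) hLL
    have hLLM : M ≤ LL := le_trans (le_max_left _ _) hLL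
    have hLLpos : 0 < LL := by linarith
    -- facts about ξ
    have hξre : L ≤ ξ.re := hξ
    have hA : L ≤ ‖ξ‖ := le_trans hξre (Complex.re_le_norm ξ)
    have hApos : 0 < ‖ξ‖ := lt_of_lt_of_le hLpos hA
    set A := ‖ξ‖ with hAdef
    set s := Real.log A with hsdef
    have hsL : LL ≤ s := Real.log_le_log hLpos hA
    have hs0 : 0 < s := lt_of_lt_of_le hLLpos hsL
    have hξ0 : ξ ≠ 0 := by
      intro h; rw [hAdef, h, norm_zero] at hApos; exact lt_irrefl 0 hApos
    have hξslit : ξ ∈ Complex.slitPlane := Or.inl (by linarith)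
    have hlogre : (Complex.log ξ).re = s := by rw [Complex.log_re]
    have hlogslit : Complex.log ξ ∈ Complex.slitPlane := Or.inl (by rw [hlogre]; exact hs0)
    have hlog0 : Complex.log ξ ≠ 0 := by
      intro h; rw [h] at hlogre; simp at hlogre; rw [← hlogre] at hs0; exact lt_irrefl _ hs0
    set ℓ := ‖Complex.log ξ‖ with hℓdef
    have hsℓ : s ≤ ℓ := by rw [← hlogre]; exact Complex.re_le_norm _
    have hℓub : ℓ ≤ s + Real.pi := by
      calc ℓ ≤ |(Complex.log ξ).re| + |(Complex.log ξ).im| :=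
            Complex.norm_le_abs_re_add_abs_im _
        _ ≤ s + Real.pi := by
            rw [hlogre, Complex.log_im, abs_of_pos hs0]
            have := Complex.abs_arg_le_pi ξ
            linarith
    have hℓpos : 0 < ℓ := lt_of_lt_of_le hs0 hsℓ
    -- the derivative
    have hc : ((α:ℝ):ℂ) = (1:ℂ)/(1+(p:ℂ)) := by
      rw [hαdef]; push_cast; ring
    have hfun : (fun w : ℂ => Complex.exp (Complex.log w ^ ((1:ℂ)/(1+(p:ℂ)))))
        = fun w => Complex.exp (Complex.log w ^ ((α:ℝ):ℂ)) := by rw [hc]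
    rw [hfun]
    have hd : HasDerivAt (fun w : ℂ => Complex.exp (Complex.log w ^ ((α:ℝ):ℂ)))
        (Complex.exp (Complex.log ξ ^ ((α:ℝ):ℂ)) *
          (((α:ℝ):ℂ) * Complex.log ξ ^ (((α:ℝ):ℂ)-1) * ξ⁻¹)) ξ :=
      ((Complex.hasDerivAt_log hξslit).cpow_const hlogslit).cexp
    rw [hd.deriv]
    rw [norm_mul, Complex.norm_exp, norm_mul, norm_mul, norm_inv, Complex.norm_real,
      Real.norm_eq_abs, abs_of_pos hα0]
    -- abs of cpow with real exponent
    have habs1 : ‖Complex.log ξ ^ (((α:ℝ):ℂ)-1)‖ = ℓ ^ (α-1) := by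
      have h : (((α:ℝ):ℂ)-1) = (((α-1 : ℝ)):ℂ) := by push_cast; ring
      rw [h, Complex.norm_cpow_of_ne_zero hlog0]
      simp [← hℓdef]
    have habs2 : ‖Complex.log ξ ^ ((α:ℝ):ℂ)‖ = ℓ ^ α := by
      rw [Complex.norm_cpow_of_ne_zero hlog0]
      simp [← hℓdef]
    rw [habs1]
    -- bound the real part in the exponent
    have hRe : (Complex.log ξ ^ ((α:ℝ):ℂ)).re ≤ ℓ ^ α := by
      calc (Complex.log ξ ^ ((α:ℝ):ℂ)).re ≤ ‖Complex.log ξ ^ ((α:ℝ):ℂ)‖ :=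
            Complex.re_le_norm _
        _ = ℓ ^ α := habs2
    have hℓα : ℓ ^ α ≤ (s + Real.pi) ^ α := Real.rpow_le_rpow hℓpos.le hℓub hα0.le
    have hMs : (s + Real.pi) ^ α ≤ s/2 := hM s (by linarith)
    have hA_eq : A⁻¹ = Real.exp (-s) := by
      have h : Real.exp s = A := Real.exp_log hApos
      rw [← h, ← Real.exp_neg]
    have hexp : Real.exp ((Complex.log ξ ^ ((α:ℝ):ℂ)).re) * A⁻¹ ≤ Real.exp (-(LL/2)) := by
      rw [hA_eq, ← Real.exp_add]
      apply Real.exp_le_exp.mpr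
      have h1 : (Complex.log ξ ^ ((α:ℝ):ℂ)).re ≤ s/2 := hRe.trans (hℓα.trans hMs)
      linarith
    have hpow1 : ℓ ^ (α-1) ≤ LL ^ (α-1) :=
      Real.rpow_le_rpow_of_nonpos hLLpos (by linarith) (by linarith)
    have hq : α - 1 = -(p/(1+p)) := by rw [hαdef]; field_simp; ring
    have hsqrt : Real.exp (-(LL/2)) = (Real.sqrt L)⁻¹ := by
      have h1 : Real.sqrt L = Real.exp (LL/2) := by
        rw [Real.sqrt_eq_rpow, Real.rpow_def_of_pos hLpos]
        ring_nf; rfl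
      rw [h1, ← Real.exp_neg]
    have hLLq : LL ^ (α-1) = (LL ^ (p/(1+p)))⁻¹ := by
      rw [hq, Real.rpow_neg hLLpos.le]
    calc Real.exp ((Complex.log ξ ^ ((α:ℝ):ℂ)).re) * (α * ℓ^(α-1) * A⁻¹)
        = (Real.exp ((Complex.log ξ ^ ((α:ℝ):ℂ)).re) * A⁻¹) * (α * ℓ^(α-1)) := by ring
      _ ≤ Real.exp (-(LL/2)) * (1 * LL^(α-1)) := by
          apply mul_le_mul hexp ?_ (by positivity) (Real.exp_nonneg _)
          exact mul_le_mul hα1.le hpow1 (Real.rpow_nonneg hℓpos.le _) one_pos.le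
      _ = (Real.sqrt L)⁻¹ * (LL ^ (p/(1+p)))⁻¹ := by rw [one_mul, hsqrt, hLLq]
      _ = 1 / (Real.sqrt L * LL ^ (p/(1+p))) := by rw [one_div, mul_inv]
end
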